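/- Let X be an n×d real matrix with ‖X‖ = 1, Y ∈ ℝⁿ, M₂ a non-singular positive semi-definite n×n diagonal matrix, 𝕏̂ = XᵀM₂X, ŵ = (M₂^{1/2}X)⁺(M₂^{1/2}Y), and Σ_D a positive semi-definite n×n matrix. Define S^lin_α(A) = (I − α𝕏̂)A(I − α𝕏̂) + α²Xᵀ(Σ_D ⊙ (XAXᵀ))X and S^int_α = α²·Xᵀ(Σ_D ⊙ ((Y − Xŵ)(Y − Xŵ)ᵀ))X. If 0 < α < min{1/‖𝕏̂‖, σ⁺min(𝕏̂)/(σ⁺min(𝕏̂)² + ‖Σ_D‖)}, then ‖(id − S^lin_α)^{-1}(S^int_α)‖ ≤ (α·‖𝕏‖·‖Σ_D‖/σ⁺min(𝕏̂))·‖Y − Xŵ‖₂² ≤ ‖Y − Xŵ‖₂², where the inverse of id − S^lin_α is taken on the subspace of matrices A with ker(X) ⊆ ker(A) and 𝕏 = XᵀX. -/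

import Mathlib

open Matrix MeasureTheory ProbabilityTheory Filter
open scoped BigOperators

set_option maxHeartbeats 1000000

noncomputable section

/-- Euclidean norm of a vector in `Fin n → ℝ`. -/
def l2norm {n : ℕ} (v : Fin n → ℝ) : ℝ := Real.sqrt (∑ i, (v i) ^ 2)

/-- Spectral norm (ℓ²-operator norm) of a real matrix. -/
def specNorm {m n : ℕ} (A : Matrix (Fin m) (Fin n) ℝ) : ℝ :=
  sSup {c : ℝ | ∃ v : Fin n → ℝ, l2norm v = 1 ∧ c = l2norm (A *ᵥ v)}

/-- The smallest non-zero singular value of a real matrix: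
the infimum of all positive `s` such that `s ^ 2` is an eigenvalue of `AᵀA`. -/
def sigmaMinPos {m n : ℕ} (A : Matrix (Fin m) (Fin n) ℝ) : ℝ :=
  sInf {s : ℝ | 0 < s ∧ ∃ v : Fin n → ℝ, v ≠ 0 ∧ (Aᵀ * A) *ᵥ v = (s ^ 2) • v}

/-- `B` is the Moore–Penrose pseudo-inverse of `A` (the four Penrose conditions). -/
def IsMoorePenrose {m n : ℕ} (A : Matrix (Fin m) (Fin n) ℝ)
    (B : Matrix (Fin n) (Fin m) ℝ) : Prop :=
  A * B * A = A ∧ B * A * B = B ∧ (A * B)ᵀ = A * B ∧ (B * A)ᵀ = B * A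

/-- `w` lies in the orthogonal complement of `ker A`. -/
def perpKer {m n : ℕ} (A : Matrix (Fin m) (Fin n) ℝ) (w : Fin n → ℝ) : Prop :=
  ∀ v : Fin n → ℝ, A *ᵥ v = 0 → w ⬝ᵥ v = 0

/-- Entrywise expectation of a random matrix. -/
def matExp {Ω : Type*} [MeasurableSpace Ω] (μ : Measure Ω) {m n : ℕ}
    (M : Ω → Matrix (Fin m) (Fin n) ℝ) : Matrix (Fin m) (Fin n) ℝ :=
  Matrix.of fun i j => ∫ ω, M ω i j ∂μ

/-- Entrywise expectation of a random vector. -/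
def vecExp {Ω : Type*} [MeasurableSpace Ω] (μ : Measure Ω) {n : ℕ}
    (v : Ω → Fin n → ℝ) : Fin n → ℝ :=
  fun i => ∫ ω, v ω i ∂μ

namespace RWGD

def clm {m n : ℕ} (A : Matrix (Fin m) (Fin n) ℝ) :
    EuclideanSpace ℝ (Fin n) →L[ℝ] EuclideanSpace ℝ (Fin m) :=
  LinearMap.toContinuousLinearMap (Matrix.toEuclideanLin A)

lemma clm_apply {m n : ℕ} (A : Matrix (Fin m) (Fin n) ℝ) (v : Fin n → ℝ) :
    clm A ((WithLp.equiv 2 (Fin n → ℝ)).symm v) = (WithLp.equiv 2 (Fin m → ℝ)).symm (A *ᵥ v) := by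
  simp [clm, Matrix.toEuclideanLin_apply]

lemma l2norm_eq {n : ℕ} (v : Fin n → ℝ) :
    l2norm v = ‖(WithLp.equiv 2 (Fin n → ℝ)).symm v‖ := by
  rw [EuclideanSpace.norm_eq, l2norm]
  congr 1
  refine Finset.sum_congr rfl fun i _ => ?_
  simp [Real.norm_eq_abs, sq_abs]

lemma specNorm_eq {m n : ℕ} (A : Matrix (Fin m) (Fin n) ℝ) :
    specNorm A = ‖clm A‖ := by
  apply le_antisymm
  · apply Real.sSup_le _ (norm_nonneg _)
    rintro c ⟨v, hv, rfl⟩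
    have := (clm A).le_opNorm ((WithLp.equiv 2 (Fin n → ℝ)).symm v)
    rw [clm_apply, ← l2norm_eq, ← l2norm_eq, hv, mul_one] at this
    exact this
  · rcases isEmpty_or_nonempty (Fin n) with h | h
    · have : clm A = 0 := by
        ext v i
        have : v = 0 := Subsingleton.elim _ _
        simp [this]
      rw [this, norm_zero]
      have : {c : ℝ | ∃ v : Fin n → ℝ, l2norm v = 1 ∧ c = l2norm (A *ᵥ v)} = ∅ := by
        ext c
        simp only [Set.mem_setOf_eq, Set.mem_empty_iff_false, iff_false, not_exists]
        rintro v ⟨hv, -⟩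
        have : v = 0 := Subsingleton.elim _ _
        rw [this] at hv
        simp [l2norm] at hv
      rw [specNorm, this, Real.sSup_empty]
    · have hbdd : BddAbove {c : ℝ | ∃ v : Fin n → ℝ, l2norm v = 1 ∧ c = l2norm (A *ᵥ v)} := by
        refine ⟨‖clm A‖, ?_⟩
        rintro c ⟨v, hv, rfl⟩
        have := (clm A).le_opNorm ((WithLp.equiv 2 (Fin n → ℝ)).symm v)
        rw [clm_apply, ← l2norm_eq, ← l2norm_eq, hv, mul_one] at this
        exact this
      -- one unit vector
      obtain ⟨i⟩ := h
      have hunit : l2norm (Pi.single i (1:ℝ)) = 1 := by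
        simp only [l2norm]
        rw [Finset.sum_eq_single i]
        · simp
        · intro b _ hb; simp [Pi.single_apply, hb]
        · simp
      apply ContinuousLinearMap.opNorm_le_bound
      · refine le_csSup_of_le hbdd ⟨Pi.single i 1, hunit, rfl⟩ ?_
        rw [l2norm]
        positivity
      · intro x
        rcases eq_or_ne x 0 with rfl | hx
        · simp
        · have hxn : ‖x‖ ≠ 0 := norm_ne_zero_iff.mpr hx
          set v : Fin n → ℝ := (WithLp.equiv 2 (Fin n → ℝ)) x with hv
          have hxv : x = (WithLp.equiv 2 (Fin n → ℝ)).symm v := rfl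
          set u : Fin n → ℝ := ‖x‖⁻¹ • v with hu
          have hul2 : l2norm u = 1 := by
            rw [l2norm_eq]
            have : (WithLp.equiv 2 (Fin n → ℝ)).symm u = ‖x‖⁻¹ • x := by
              rw [hu, hxv]; rfl
            rw [this, norm_smul]
            simp [hxn]
          have hmem : l2norm (A *ᵥ u) ∈
              {c : ℝ | ∃ v : Fin n → ℝ, l2norm v = 1 ∧ c = l2norm (A *ᵥ v)} :=
            ⟨u, hul2, rfl⟩
          have hle := le_csSup hbdd hmem
          have : ‖clm A x‖ = ‖x‖ * l2norm (A *ᵥ u) := by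
            rw [l2norm_eq, ← clm_apply]
            have : (WithLp.equiv 2 (Fin n → ℝ)).symm u = ‖x‖⁻¹ • x := by
              rw [hu, hxv]; rfl
            rw [this, ContinuousLinearMap.map_smul, norm_smul]
            simp [abs_of_nonneg (norm_nonneg x), hxn]
          rw [this, mul_comm]
          exact mul_le_mul_of_nonneg_right hle (norm_nonneg x)

lemma l2norm_nonneg {n : ℕ} (v : Fin n → ℝ) : 0 ≤ l2norm v := Real.sqrt_nonneg _

lemma l2norm_sq {n : ℕ} (v : Fin n → ℝ) : l2norm v ^ 2 = ∑ i, v i ^ 2 := by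
  rw [l2norm, Real.sq_sqrt]; positivity

lemma specNorm_nonneg {m n : ℕ} (A : Matrix (Fin m) (Fin n) ℝ) : 0 ≤ specNorm A := by
  rw [specNorm_eq]; exact norm_nonneg _

lemma l2norm_mulVec_le {m n : ℕ} (A : Matrix (Fin m) (Fin n) ℝ) (v : Fin n → ℝ) :
    l2norm (A *ᵥ v) ≤ specNorm A * l2norm v := by
  have := (clm A).le_opNorm ((WithLp.equiv 2 (Fin n → ℝ)).symm v)
  rwa [clm_apply, ← l2norm_eq, ← l2norm_eq, ← specNorm_eq] at this

lemma specNorm_le_bound {m n : ℕ} {A : Matrix (Fin m) (Fin n) ℝ} {c : ℝ} (hc : 0 ≤ c)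
    (h : ∀ v, l2norm (A *ᵥ v) ≤ c * l2norm v) : specNorm A ≤ c := by
  apply Real.sSup_le _ hc
  rintro x ⟨v, hv, rfl⟩
  simpa [hv] using h v

lemma conjTranspose_eq_transpose {m n : ℕ} (A : Matrix (Fin m) (Fin n) ℝ) : Aᴴ = Aᵀ := by
  ext i j; simp [conjTranspose_apply]

lemma clm_transpose {m n : ℕ} (A : Matrix (Fin m) (Fin n) ℝ) :
    clm Aᵀ = ContinuousLinearMap.adjoint (clm A) := by
  rw [show Aᵀ = Aᴴ from (conjTranspose_eq_transpose A).symm]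
  unfold clm
  rw [Matrix.toEuclideanLin_conjTranspose_eq_adjoint]
  exact LinearMap.adjoint_toContinuousLinearMap _

lemma specNorm_transpose {m n : ℕ} (A : Matrix (Fin m) (Fin n) ℝ) :
    specNorm Aᵀ = specNorm A := by
  rw [specNorm_eq, specNorm_eq, clm_transpose]
  exact LinearIsometryEquiv.norm_map ContinuousLinearMap.adjoint (clm A)

lemma clm_mul {m n k : ℕ} (A : Matrix (Fin m) (Fin n) ℝ) (B : Matrix (Fin n) (Fin k) ℝ) :
    clm (A * B) = (clm A).comp (clm B) := by
  ext v
  rw [ContinuousLinearMap.comp_apply]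
  have hv : v = (WithLp.equiv 2 (Fin k → ℝ)).symm ((WithLp.equiv 2 (Fin k → ℝ)) v) := rfl
  conv_lhs => rw [hv]
  conv_rhs => rw [hv]
  rw [clm_apply, clm_apply]
  rw [show (WithLp.equiv 2 (Fin n → ℝ)).symm (B *ᵥ (WithLp.equiv 2 (Fin k → ℝ)) v) = (WithLp.equiv 2 (Fin n → ℝ)).symm (B *ᵥ (WithLp.equiv 2 (Fin k → ℝ)) v) from rfl, clm_apply]
  rw [Matrix.mulVec_mulVec]

lemma specNorm_mul_le {m n k : ℕ} (A : Matrix (Fin m) (Fin n) ℝ) (B : Matrix (Fin n) (Fin k) ℝ) :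
    specNorm (A * B) ≤ specNorm A * specNorm B := by
  rw [specNorm_eq, specNorm_eq, specNorm_eq, clm_mul]
  exact ContinuousLinearMap.opNorm_comp_le _ _

lemma specNorm_transpose_mul_self {m n : ℕ} (A : Matrix (Fin m) (Fin n) ℝ) :
    specNorm (Aᵀ * A) = specNorm A * specNorm A := by
  rw [specNorm_eq, specNorm_eq, clm_mul, clm_transpose]
  exact ContinuousLinearMap.norm_adjoint_comp_self _

lemma abs_apply_le_l2norm {n : ℕ} (v : Fin n → ℝ) (i : Fin n) : |v i| ≤ l2norm v := by
  rw [l2norm, ← Real.sqrt_sq_eq_abs]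
  apply Real.sqrt_le_sqrt
  exact Finset.single_le_sum (f := fun j => v j ^ 2) (fun j _ => sq_nonneg _) (Finset.mem_univ i)

lemma abs_entry_le_specNorm {m n : ℕ} (A : Matrix (Fin m) (Fin n) ℝ) (i : Fin m) (j : Fin n) :
    |A i j| ≤ specNorm A := by
  have h1 : |A i j| ≤ l2norm (A *ᵥ Pi.single j 1) := by
    have := abs_apply_le_l2norm (A *ᵥ Pi.single j 1) i
    rw [mulVec_single_one] at this
    simpa [Matrix.transpose_apply] using this
  have h2 : l2norm (Pi.single j (1:ℝ)) = 1 := by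
    simp only [l2norm]
    rw [Finset.sum_eq_single j]
    · simp
    · intro b _ hb; simp [Pi.single_apply, hb]
    · simp
  calc |A i j| ≤ l2norm (A *ᵥ Pi.single j 1) := h1
    _ ≤ specNorm A * l2norm (Pi.single j 1) := l2norm_mulVec_le _ _
    _ = specNorm A := by rw [h2, mul_one]

/-! ### Frobenius norm -/

def froSq {m n : ℕ} (A : Matrix (Fin m) (Fin n) ℝ) : ℝ := ∑ i, ∑ j, A i j ^ 2

def fro {m n : ℕ} (A : Matrix (Fin m) (Fin n) ℝ) : ℝ := Real.sqrt (froSq A)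

lemma froSq_def {m n : ℕ} (A : Matrix (Fin m) (Fin n) ℝ) : froSq A = ∑ i, ∑ j, A i j ^ 2 := rfl

lemma fro_def {m n : ℕ} (A : Matrix (Fin m) (Fin n) ℝ) : fro A = Real.sqrt (froSq A) := rfl

lemma froSq_nonneg {m n : ℕ} (A : Matrix (Fin m) (Fin n) ℝ) : 0 ≤ froSq A := by
  unfold froSq; positivity

lemma fro_nonneg {m n : ℕ} (A : Matrix (Fin m) (Fin n) ℝ) : 0 ≤ fro A := Real.sqrt_nonneg _

lemma fro_sq {m n : ℕ} (A : Matrix (Fin m) (Fin n) ℝ) : fro A ^ 2 = froSq A :=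
  Real.sq_sqrt (froSq_nonneg A)

lemma fro_eq_norm {m n : ℕ} (A : Matrix (Fin m) (Fin n) ℝ) :
    fro A = ‖((WithLp.equiv 2 ((Fin m × Fin n) → ℝ)).symm (fun p => A p.1 p.2) :
      EuclideanSpace ℝ (Fin m × Fin n))‖ := by
  rw [EuclideanSpace.norm_eq, fro, froSq]
  congr 1
  rw [Fintype.sum_prod_type]
  refine Finset.sum_congr rfl fun i _ => Finset.sum_congr rfl fun j _ => ?_
  simp [Real.norm_eq_abs, sq_abs]

lemma fro_add_le {m n : ℕ} (A B : Matrix (Fin m) (Fin n) ℝ) :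
    fro (A + B) ≤ fro A + fro B := by
  rw [fro_eq_norm, fro_eq_norm, fro_eq_norm]
  have : ((WithLp.equiv 2 ((Fin m × Fin n) → ℝ)).symm (fun p => (A + B) p.1 p.2) :
      EuclideanSpace ℝ (Fin m × Fin n)) =
      (WithLp.equiv 2 ((Fin m × Fin n) → ℝ)).symm (fun p => A p.1 p.2) +
      (WithLp.equiv 2 ((Fin m × Fin n) → ℝ)).symm (fun p => B p.1 p.2) := by
    rfl
  rw [this]
  exact norm_add_le _ _

lemma fro_smul {m n : ℕ} (c : ℝ) (A : Matrix (Fin m) (Fin n) ℝ) :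
    fro (c • A) = |c| * fro A := by
  unfold fro froSq
  have : ∀ i j, (c • A) i j ^ 2 = c ^ 2 * A i j ^ 2 := by
    intro i j; rw [Matrix.smul_apply, smul_eq_mul, mul_pow]
  simp only [this, ← Finset.mul_sum]
  rw [Real.sqrt_mul (sq_nonneg c), Real.sqrt_sq_eq_abs]

lemma fro_transpose {m n : ℕ} (A : Matrix (Fin m) (Fin n) ℝ) : fro Aᵀ = fro A := by
  unfold fro froSq
  rw [Finset.sum_comm]
  rfl

lemma eq_zero_of_froSq_eq_zero {m n : ℕ} {A : Matrix (Fin m) (Fin n) ℝ}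
    (h : froSq A = 0) : A = 0 := by
  ext i j
  have h1 : ∀ i ∈ Finset.univ (α := Fin m), (0:ℝ) ≤ ∑ j, A i j ^ 2 := by
    intro i _; positivity
  have h2 := (Finset.sum_eq_zero_iff_of_nonneg h1).mp h i (Finset.mem_univ i)
  have h3 : ∀ j ∈ Finset.univ (α := Fin n), (0:ℝ) ≤ A i j ^ 2 := fun j _ => sq_nonneg _
  have h4 := (Finset.sum_eq_zero_iff_of_nonneg h3).mp h2 j (Finset.mem_univ j)
  simpa using pow_eq_zero_iff (n := 2) (by norm_num) |>.mp h4

lemma l2norm_mulVec_le_fro {m n : ℕ} (A : Matrix (Fin m) (Fin n) ℝ) (v : Fin n → ℝ) :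
    l2norm (A *ᵥ v) ≤ fro A * l2norm v := by
  have hsq : (∑ i, (A *ᵥ v) i ^ 2) ≤ froSq A * ∑ j, v j ^ 2 := by
    rw [froSq, Finset.sum_mul]
    apply Finset.sum_le_sum
    intro i _
    exact Finset.sum_mul_sq_le_sq_mul_sq Finset.univ (fun j => A i j) v
  calc l2norm (A *ᵥ v) = Real.sqrt (∑ i, (A *ᵥ v) i ^ 2) := rfl
    _ ≤ Real.sqrt (froSq A * ∑ j, v j ^ 2) := Real.sqrt_le_sqrt hsq
    _ = fro A * l2norm v := by
        rw [Real.sqrt_mul (froSq_nonneg A)]; rfl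

lemma specNorm_le_fro {m n : ℕ} (A : Matrix (Fin m) (Fin n) ℝ) : specNorm A ≤ fro A :=
  specNorm_le_bound (fro_nonneg A) (l2norm_mulVec_le_fro A)

lemma froSq_eq_trace {m n : ℕ} (A : Matrix (Fin m) (Fin n) ℝ) :
    froSq A = Matrix.trace (A * Aᵀ) := by
  unfold froSq Matrix.trace
  refine Finset.sum_congr rfl fun i _ => ?_
  simp [Matrix.mul_apply, Matrix.diag, pow_two]

lemma froSq_mul_unitary {m n : ℕ} (M : Matrix (Fin m) (Fin n) ℝ) (U : Matrix (Fin n) (Fin n) ℝ)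
    (hU : U * Uᵀ = 1) : froSq (M * U) = froSq M := by
  rw [froSq_eq_trace, froSq_eq_trace, Matrix.transpose_mul, show M * U * (Uᵀ * Mᵀ) =
    M * (U * Uᵀ) * Mᵀ by rw [← Matrix.mul_assoc, Matrix.mul_assoc M U], hU, Matrix.mul_one]

lemma fro_mul_le_left {m n k : ℕ} (C : Matrix (Fin m) (Fin n) ℝ) (M : Matrix (Fin n) (Fin k) ℝ) :
    fro (C * M) ≤ specNorm C * fro M := by
  have hsq : froSq (C * M) ≤ specNorm C ^ 2 * froSq M := by
    rw [froSq, Finset.sum_comm, froSq, Finset.sum_comm (γ := Fin n), Finset.mul_sum]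
    apply Finset.sum_le_sum
    intro j _
    have h1 : ∀ i, (C * M) i j = (C *ᵥ (fun t => M t j)) i := by
      intro i; simp [Matrix.mul_apply, Matrix.mulVec, dotProduct]
    simp only [h1]
    have h2 : l2norm (C *ᵥ fun t => M t j) ^ 2 ≤ (specNorm C * l2norm fun t => M t j) ^ 2 :=
      pow_le_pow_left₀ (l2norm_nonneg _) (l2norm_mulVec_le C (fun t => M t j)) 2
    calc (∑ i, (C *ᵥ fun t => M t j) i ^ 2) = l2norm (C *ᵥ fun t => M t j) ^ 2 := by
          rw [l2norm_sq]
      _ ≤ (specNorm C * l2norm fun t => M t j) ^ 2 := h2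
      _ = specNorm C ^ 2 * ∑ i, M i j ^ 2 := by
          rw [mul_pow, l2norm_sq]
  calc fro (C * M) = Real.sqrt (froSq (C * M)) := rfl
    _ ≤ Real.sqrt (specNorm C ^ 2 * froSq M) := Real.sqrt_le_sqrt hsq
    _ = specNorm C * fro M := by
        rw [Real.sqrt_mul (sq_nonneg _), Real.sqrt_sq (specNorm_nonneg C)]; rfl

lemma fro_mul_le_right {m n k : ℕ} (M : Matrix (Fin m) (Fin n) ℝ) (C : Matrix (Fin n) (Fin k) ℝ) :
    fro (M * C) ≤ fro M * specNorm C := by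
  calc fro (M * C) = fro ((M * C)ᵀ) := (fro_transpose _).symm
    _ = fro (Cᵀ * Mᵀ) := by rw [Matrix.transpose_mul]
    _ ≤ specNorm Cᵀ * fro Mᵀ := fro_mul_le_left _ _
    _ = fro M * specNorm C := by rw [specNorm_transpose, fro_transpose, mul_comm]

lemma fro_hadamard_le {m n : ℕ} {S M : Matrix (Fin m) (Fin n) ℝ} {s : ℝ} (hs : 0 ≤ s)
    (h : ∀ i j, |S i j| ≤ s) : fro (S ⊙ M) ≤ s * fro M := by
  have hsq : froSq (S ⊙ M) ≤ s ^ 2 * froSq M := by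
    rw [froSq, froSq, Finset.mul_sum]
    apply Finset.sum_le_sum
    intro i _
    rw [Finset.mul_sum]
    apply Finset.sum_le_sum
    intro j _
    have : (S ⊙ M) i j = S i j * M i j := rfl
    rw [this, mul_pow]
    apply mul_le_mul_of_nonneg_right _ (sq_nonneg _)
    calc S i j ^ 2 = |S i j| ^ 2 := (sq_abs _).symm
      _ ≤ s ^ 2 := by apply pow_le_pow_left₀ (abs_nonneg _) (h i j) 2
  calc fro (S ⊙ M) = Real.sqrt (froSq (S ⊙ M)) := rfl
    _ ≤ Real.sqrt (s ^ 2 * froSq M) := Real.sqrt_le_sqrt hsq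
    _ = s * fro M := by rw [Real.sqrt_mul (sq_nonneg _), Real.sqrt_sq hs]; rfl

lemma fro_vecMulVec {n : ℕ} (r : Fin n → ℝ) : fro (vecMulVec r r) = l2norm r ^ 2 := by
  unfold fro froSq
  have : ∀ i j, vecMulVec r r i j ^ 2 = r i ^ 2 * r j ^ 2 := by
    intro i j; rw [vecMulVec_apply]; ring
  simp only [this, ← Finset.mul_sum, ← Finset.sum_mul]
  rw [← pow_two]
  rw [Real.sqrt_sq (by positivity), l2norm_sq]

lemma l2norm_pos {n : ℕ} {v : Fin n → ℝ} (hv : v ≠ 0) : 0 < l2norm v := by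
  obtain ⟨i, hi⟩ := Function.ne_iff.mp hv
  have : (0:ℝ) < ∑ j, v j ^ 2 := by
    apply Finset.sum_pos' (fun j _ => sq_nonneg _)
    exact ⟨i, Finset.mem_univ i, pow_pos (abs_pos.mpr hi) 2 |>.trans_le (by rw [sq_abs])⟩
  exact Real.sqrt_pos.mpr this

lemma l2norm_smul {n : ℕ} (c : ℝ) (v : Fin n → ℝ) : l2norm (c • v) = |c| * l2norm v := by
  unfold l2norm
  have : ∀ i, (c • v) i ^ 2 = c ^ 2 * v i ^ 2 := by intro i; simp [mul_pow]
  simp only [this, ← Finset.mul_sum]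
  rw [Real.sqrt_mul (sq_nonneg c), Real.sqrt_sq_eq_abs]

lemma dot_self_pos {n : ℕ} {v : Fin n → ℝ} (hv : v ≠ 0) : 0 < v ⬝ᵥ v := by
  have : v ⬝ᵥ v = ∑ i, v i ^ 2 := by
    unfold dotProduct; exact Finset.sum_congr rfl fun i _ => (pow_two _).symm
  rw [this, ← l2norm_sq]
  have := l2norm_pos hv
  positivity

section Eigen
variable {d : ℕ} {H : Matrix (Fin d) (Fin d) ℝ}

lemma eig_nonneg (hpsd : H.PosSemidef) {μ : ℝ} {v : Fin d → ℝ} (hv : v ≠ 0)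
    (h : H *ᵥ v = μ • v) : 0 ≤ μ := by
  have h2 := hpsd.dotProduct_mulVec_nonneg v
  rw [h] at h2
  have hsv : (star v : Fin d → ℝ) = v := by
    funext i; simp
  rw [hsv, dotProduct_smul, smul_eq_mul] at h2
  have := dot_self_pos hv
  nlinarith [h2, this]

lemma eig_le_spec {μ : ℝ} {v : Fin d → ℝ} (hv : v ≠ 0)
    (h : H *ᵥ v = μ • v) : |μ| ≤ specNorm H := by
  have h1 : l2norm (H *ᵥ v) ≤ specNorm H * l2norm v := l2norm_mulVec_le H v
  rw [h, l2norm_smul] at h1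
  have h2 := l2norm_pos hv
  exact le_of_mul_le_mul_right h1 h2

lemma sigmaMinPos_nonneg {m' n' : ℕ} (A : Matrix (Fin m') (Fin n') ℝ) : 0 ≤ sigmaMinPos A :=
  Real.sInf_nonneg (fun s hs => le_of_lt hs.1)

lemma sigmaMinPos_le_eig (hH : Hᵀ = H) {μ : ℝ} {v : Fin d → ℝ} (hv : v ≠ 0)
    (h : H *ᵥ v = μ • v) (hμ : 0 < μ) : sigmaMinPos H ≤ μ := by
  apply csInf_le ⟨0, fun s hs => le_of_lt hs.1⟩
  refine ⟨hμ, v, hv, ?_⟩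
  rw [hH, ← Matrix.mulVec_mulVec, h, Matrix.mulVec_smul, h, smul_smul, ← pow_two]

lemma fro_mul_one_sub_smul_le (hpsd : H.PosSemidef) {α κ : ℝ} (hκ : 0 ≤ κ)
    (M : Matrix (Fin d) (Fin d) ℝ)
    (hcase : ∀ (μ : ℝ) (v : Fin d → ℝ), v ≠ 0 → H *ᵥ v = μ • v →
      |1 - α * μ| ≤ κ ∨ M *ᵥ v = 0) :
    fro (M * ((1 : Matrix (Fin d) (Fin d) ℝ) - α • H)) ≤ κ * fro M := by
  classical
  have hH : H.IsHermitian := hpsd.1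
  set U : Matrix (Fin d) (Fin d) ℝ := (Matrix.IsHermitian.eigenvectorUnitary hH :
    Matrix (Fin d) (Fin d) ℝ) with hUdef
  set μs : Fin d → ℝ := hH.eigenvalues with hμs
  have hmem := (Matrix.IsHermitian.eigenvectorUnitary hH).2
  have hstar : star U = Uᵀ := by
    rw [Matrix.star_eq_conjTranspose]
    ext i j; simp [Matrix.conjTranspose_apply]
  have hU2 : U * Uᵀ = 1 := by rw [← hstar]; exact Matrix.mem_unitaryGroup_iff.mp hmem
  have hU1 : Uᵀ * U = 1 := by rw [← hstar]; exact Matrix.mem_unitaryGroup_iff'.mp hmem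
  have hspec : H = U * Matrix.diagonal μs * Uᵀ := by
    have := Matrix.IsHermitian.spectral_theorem hH
    rw [← hstar]
    rw [Unitary.conjStarAlgAut_apply] at this
    exact this
  have hHU : H * U = U * Matrix.diagonal μs := by
    rw [hspec, Matrix.mul_assoc, Matrix.mul_assoc, hU1, Matrix.mul_one]
  set G : Matrix (Fin d) (Fin d) ℝ := (1 : Matrix (Fin d) (Fin d) ℝ) - α • H with hG
  have hGU : G * U = U * Matrix.diagonal (fun j => 1 - α * μs j) := by
    rw [hG, Matrix.sub_mul, Matrix.one_mul, Matrix.smul_mul, hHU]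
    have : Matrix.diagonal (fun j => 1 - α * μs j) =
        (1 : Matrix (Fin d) (Fin d) ℝ) - α • Matrix.diagonal μs := by
      rw [← Matrix.diagonal_one, ← Matrix.diagonal_smul, ← Matrix.diagonal_sub]
      congr 1
    rw [this, Matrix.mul_sub, Matrix.mul_one, Matrix.mul_smul]
  -- columns of U are eigenvectors
  have hcolsq : ∀ j, ∑ i, U i j ^ 2 = 1 := by
    intro j
    have := congrArg (fun (N : Matrix (Fin d) (Fin d) ℝ) => N j j) hU1
    simp only [Matrix.mul_apply, Matrix.transpose_apply, Matrix.one_apply_eq] at this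
    rw [← this]
    exact Finset.sum_congr rfl fun i _ => pow_two _
  have hcolne : ∀ j, (fun i => U i j) ≠ 0 := by
    intro j hcon
    have h0 := hcolsq j
    rw [Finset.sum_eq_zero (fun i _ => by
      have : U i j = 0 := congrFun hcon i
      rw [this]; ring)] at h0
    norm_num at h0
  have hcoleig : ∀ j, H *ᵥ (fun i => U i j) = μs j • (fun i => U i j) := by
    intro j
    funext i
    have := congrArg (fun (N : Matrix (Fin d) (Fin d) ℝ) => N i j) hHU
    simp only [Matrix.mul_apply, Matrix.mul_diagonal, Matrix.diagonal] at this
    simp only [Matrix.mulVec, dotProduct]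
    rw [show (∑ k, H i k * U k j) = (H * U) i j from rfl, hHU]
    simp [Matrix.mul_diagonal, mul_comm]
  -- main estimate
  have key : froSq (M * G) ≤ κ ^ 2 * froSq M := by
    have h1 : froSq (M * G) = froSq (M * G * U) := (froSq_mul_unitary _ U hU2).symm
    have h2 : M * G * U = (M * U) * Matrix.diagonal (fun j => 1 - α * μs j) := by
      rw [Matrix.mul_assoc, hGU, ← Matrix.mul_assoc]
    have h3 : froSq ((M * U) * Matrix.diagonal (fun j => 1 - α * μs j)) =
        ∑ j, (1 - α * μs j) ^ 2 * ∑ i, (M * U) i j ^ 2 := by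
      rw [froSq_def, Finset.sum_comm]
      refine Finset.sum_congr rfl fun j _ => ?_
      rw [Finset.mul_sum]
      refine Finset.sum_congr rfl fun i _ => ?_
      rw [Matrix.mul_diagonal]
      ring
    have h4 : ∀ j, (1 - α * μs j) ^ 2 * (∑ i, (M * U) i j ^ 2) ≤
        κ ^ 2 * ∑ i, (M * U) i j ^ 2 := by
      intro j
      rcases hcase (μs j) (fun i => U i j) (hcolne j) (hcoleig j) with hc | hc
      · apply mul_le_mul_of_nonneg_right _ (by positivity)
        calc (1 - α * μs j) ^ 2 = |1 - α * μs j| ^ 2 := (sq_abs _).symm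
          _ ≤ κ ^ 2 := pow_le_pow_left₀ (abs_nonneg _) hc 2
      · have : ∀ i, (M * U) i j = 0 := by
          intro i
          have := congrFun hc i
          simpa [Matrix.mulVec, dotProduct, Matrix.mul_apply] using this
        simp [this]
    have h5 : froSq (M * U) = ∑ j, ∑ i, (M * U) i j ^ 2 := by
      rw [froSq_def, Finset.sum_comm]
    calc froSq (M * G) = ∑ j, (1 - α * μs j) ^ 2 * ∑ i, (M * U) i j ^ 2 := by
          rw [h1, h2, h3]
      _ ≤ ∑ j, κ ^ 2 * ∑ i, (M * U) i j ^ 2 := Finset.sum_le_sum fun j _ => h4 j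
      _ = κ ^ 2 * froSq (M * U) := by rw [← Finset.mul_sum, h5]
      _ = κ ^ 2 * froSq M := by rw [froSq_mul_unitary _ U hU2]
  calc fro (M * G) = Real.sqrt (froSq (M * G)) := fro_def _
    _ ≤ Real.sqrt (κ ^ 2 * froSq M) := Real.sqrt_le_sqrt key
    _ = κ * fro M := by
        rw [Real.sqrt_mul (sq_nonneg _), Real.sqrt_sq hκ, fro_def]

end Eigen

lemma transpose_hadamard {m n : ℕ} (A B : Matrix (Fin m) (Fin n) ℝ) :
    (Matrix.hadamard A B)ᵀ = Matrix.hadamard Aᵀ Bᵀ := by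
  ext i j; simp [Matrix.hadamard_apply]

lemma fro_XtNX_le {n d : ℕ} {X : Matrix (Fin n) (Fin d) ℝ} (hX : specNorm X = 1)
    (N : Matrix (Fin n) (Fin n) ℝ) : fro (Xᵀ * N * X) ≤ fro N := by
  calc fro (Xᵀ * N * X) ≤ fro (Xᵀ * N) * specNorm X := fro_mul_le_right _ _
    _ ≤ specNorm Xᵀ * fro N * specNorm X :=
        mul_le_mul_of_nonneg_right (fro_mul_le_left _ _) (specNorm_nonneg _)
    _ = fro N := by rw [specNorm_transpose, hX]; ring

lemma fro_XAXt_le {n d : ℕ} {X : Matrix (Fin n) (Fin d) ℝ} (hX : specNorm X = 1)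
    (A : Matrix (Fin d) (Fin d) ℝ) : fro (X * A * Xᵀ) ≤ fro A := by
  calc fro (X * A * Xᵀ) ≤ fro (X * A) * specNorm Xᵀ := fro_mul_le_right _ _
    _ ≤ specNorm X * fro A * specNorm Xᵀ :=
        mul_le_mul_of_nonneg_right (fro_mul_le_left _ _) (specNorm_nonneg _)
    _ = fro A := by rw [specNorm_transpose, hX]; ring

end RWGD

/-- long-run variance bound, display (14) in the paper.
For `‖X‖ = 1` and admissible `α`, the matrix `(id - S^lin_α)^{-1}(S^int_α)`
(inverse taken on the subspace of matrices whose kernel contains `ker X`)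
has spectral norm at most `(α‖𝕏‖‖Σ_D‖/σ⁺min(𝕏̂))‖Y - Xŵ‖₂² ≤ ‖Y - Xŵ‖₂²`. -/
theorem randomly_weighted_gd_stmt15 {n d : ℕ}
    (X : Matrix (Fin n) (Fin d) ℝ) (hXnorm : specNorm X = 1)
    (Y : Fin n → ℝ)
    (M2 Rh : Matrix (Fin n) (Fin n) ℝ)
    (hM2diag : M2.IsDiag) (hM2psd : M2.PosSemidef) (hM2unit : IsUnit M2.det)
    (hRhpsd : Rh.PosSemidef) (hRR : Rh * Rh = M2)
    (Xhp : Matrix (Fin d) (Fin n) ℝ) (hXhp : IsMoorePenrose (Rh * X) Xhp)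
    (what : Fin d → ℝ) (hwhat : what = Xhp *ᵥ (Rh *ᵥ Y))
    (SD : Matrix (Fin n) (Fin n) ℝ) (hSDpsd : SD.PosSemidef)
    (α : ℝ) (hα0 : 0 < α)
    (hα1 : α * specNorm (Xᵀ * M2 * X) < 1)
    (hα2 : α * (sigmaMinPos (Xᵀ * M2 * X) ^ 2 + specNorm SD)
        < sigmaMinPos (Xᵀ * M2 * X)) :
    ∃ T : Matrix (Fin d) (Fin d) ℝ → Matrix (Fin d) (Fin d) ℝ,
      (∀ A : Matrix (Fin d) (Fin d) ℝ,
        (∀ v : Fin d → ℝ, X *ᵥ v = 0 → A *ᵥ v = 0) →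
        (∀ v : Fin d → ℝ, X *ᵥ v = 0 → T A *ᵥ v = 0)) ∧
      (∀ A : Matrix (Fin d) (Fin d) ℝ,
        (∀ v : Fin d → ℝ, X *ᵥ v = 0 → A *ᵥ v = 0) →
        T (A - (((1 : Matrix (Fin d) (Fin d) ℝ) - α • (Xᵀ * M2 * X)) * A
              * ((1 : Matrix (Fin d) (Fin d) ℝ) - α • (Xᵀ * M2 * X))
            + α ^ 2 • (Xᵀ * Matrix.hadamard SD (X * A * Xᵀ) * X))) = A) ∧
      (∀ A : Matrix (Fin d) (Fin d) ℝ,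
        (∀ v : Fin d → ℝ, X *ᵥ v = 0 → A *ᵥ v = 0) →
        T A - (((1 : Matrix (Fin d) (Fin d) ℝ) - α • (Xᵀ * M2 * X)) * T A
              * ((1 : Matrix (Fin d) (Fin d) ℝ) - α • (Xᵀ * M2 * X))
            + α ^ 2 • (Xᵀ * Matrix.hadamard SD (X * T A * Xᵀ) * X)) = A) ∧
      specNorm (T (α ^ 2 • (Xᵀ * Matrix.hadamard SD
            (Matrix.vecMulVec (Y - X *ᵥ what) (Y - X *ᵥ what)) * X)))
        ≤ α * specNorm (Xᵀ * X) * specNorm SD / sigmaMinPos (Xᵀ * M2 * X)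
            * (l2norm (Y - X *ᵥ what)) ^ 2 ∧
      α * specNorm (Xᵀ * X) * specNorm SD / sigmaMinPos (Xᵀ * M2 * X)
          * (l2norm (Y - X *ᵥ what)) ^ 2
        ≤ (l2norm (Y - X *ᵥ what)) ^ 2 := by
  classical
  have hSDsymm : SDᵀ = SD := by
    rw [← RWGD.conjTranspose_eq_transpose]; exact hSDpsd.1
  have hM2symm : M2ᵀ = M2 := by
    rw [← RWGD.conjTranspose_eq_transpose]; exact hM2psd.1
  have hRhsymm : Rhᵀ = Rh := by
    rw [← RWGD.conjTranspose_eq_transpose]; exact hRhpsd.1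
  set H : Matrix (Fin d) (Fin d) ℝ := Xᵀ * M2 * X with hHdef
  have hHsymm : Hᵀ = H := by
    rw [hHdef, Matrix.transpose_mul, Matrix.transpose_mul, Matrix.transpose_transpose,
      hM2symm, Matrix.mul_assoc]
  have hHpsd : H.PosSemidef := by
    have h := hM2psd.conjTranspose_mul_mul_same X
    rwa [RWGD.conjTranspose_eq_transpose X] at h
  set s : ℝ := specNorm SD with hsdef
  set σ : ℝ := sigmaMinPos H with hσdef
  set r : Fin n → ℝ := Y - X *ᵥ what with hrdef
  have hs0 : 0 ≤ s := RWGD.specNorm_nonneg SD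
  have hσ0 : 0 ≤ σ := RWGD.sigmaMinPos_nonneg H
  have hσpos : 0 < σ := by
    have h1 : (0:ℝ) ≤ α * (σ ^ 2 + s) := mul_nonneg hα0.le (by positivity)
    linarith [hα2]
  have hασ1 : α * σ < 1 := by
    have h1 : α * σ ^ 2 < σ := by nlinarith [mul_nonneg hα0.le hs0]
    nlinarith [hσpos]
  have hκ0 : (0:ℝ) ≤ 1 - α * σ := by linarith
  -- kernel facts
  have hHv0 : ∀ v : Fin d → ℝ, X *ᵥ v = 0 → H *ᵥ v = 0 := by
    intro v hv
    rw [hHdef, ← Matrix.mulVec_mulVec, hv, Matrix.mulVec_zero]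
  have hXker : ∀ v : Fin d → ℝ, H *ᵥ v = 0 → X *ᵥ v = 0 := by
    intro v hv
    have h1 : v ⬝ᵥ (H *ᵥ v) = 0 := by rw [hv, dotProduct_zero]
    have h2 : H *ᵥ v = Xᵀ *ᵥ (M2 *ᵥ (X *ᵥ v)) := by
      rw [hHdef, ← Matrix.mulVec_mulVec, ← Matrix.mulVec_mulVec]
    have h3 : v ⬝ᵥ (Xᵀ *ᵥ (M2 *ᵥ (X *ᵥ v))) = (X *ᵥ v) ⬝ᵥ (M2 *ᵥ (X *ᵥ v)) := by
      rw [Matrix.dotProduct_mulVec, Matrix.vecMul_transpose]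
    have h4 : (X *ᵥ v) ⬝ᵥ (M2 *ᵥ (X *ᵥ v)) =
        (Rh *ᵥ (X *ᵥ v)) ⬝ᵥ (Rh *ᵥ (X *ᵥ v)) := by
      rw [← hRR, ← Matrix.mulVec_mulVec, Matrix.dotProduct_mulVec]
      congr 1
      rw [← Matrix.mulVec_transpose, hRhsymm]
    have h5 : Rh *ᵥ (X *ᵥ v) = 0 := by
      by_contra hne
      have hpos := RWGD.dot_self_pos hne
      rw [h2, h3, h4] at h1
      linarith
    have h6 : M2 *ᵥ (X *ᵥ v) = 0 := by
      rw [← hRR, ← Matrix.mulVec_mulVec, h5, Matrix.mulVec_zero]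
    have h7 : X *ᵥ v = M2⁻¹ *ᵥ (M2 *ᵥ (X *ᵥ v)) := by
      rw [Matrix.mulVec_mulVec, Matrix.nonsing_inv_mul M2 hM2unit, Matrix.one_mulVec]
    rw [h7, h6, Matrix.mulVec_zero]
  set G : Matrix (Fin d) (Fin d) ℝ := (1 : Matrix (Fin d) (Fin d) ℝ) - α • H with hGdef
  have hGsymm : Gᵀ = G := by
    rw [hGdef, Matrix.transpose_sub, Matrix.transpose_one, Matrix.transpose_smul, hHsymm]
  have hGv : ∀ v : Fin d → ℝ, X *ᵥ v = 0 → G *ᵥ v = v := by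
    intro v hv
    rw [hGdef, Matrix.sub_mulVec, Matrix.one_mulVec, Matrix.smul_mulVec,
      hHv0 v hv, smul_zero, sub_zero]
  -- key contraction estimates
  have key1 : ∀ M : Matrix (Fin d) (Fin d) ℝ, (∀ v, X *ᵥ v = 0 → M *ᵥ v = 0) →
      RWGD.fro (M * G) ≤ (1 - α * σ) * RWGD.fro M := by
    intro M hM
    apply RWGD.fro_mul_one_sub_smul_le hHpsd hκ0
    intro μ v hv heig
    rcases eq_or_ne μ 0 with rfl | hμ
    · right
      exact hM v (hXker v (by rw [heig, zero_smul]))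
    · left
      have hμ0 : 0 ≤ μ := RWGD.eig_nonneg hHpsd hv heig
      have hμpos : 0 < μ := lt_of_le_of_ne hμ0 (Ne.symm hμ)
      have hσμ : σ ≤ μ := RWGD.sigmaMinPos_le_eig hHsymm hv heig hμpos
      have hμspec : |μ| ≤ specNorm H := RWGD.eig_le_spec hv heig
      rw [abs_of_nonneg hμ0] at hμspec
      have hαμ : α * μ < 1 :=
        lt_of_le_of_lt (mul_le_mul_of_nonneg_left hμspec hα0.le) hα1
      rw [abs_le]
      constructor
      · nlinarith
      · nlinarith
  have key2 : ∀ M : Matrix (Fin d) (Fin d) ℝ, RWGD.fro (M * G) ≤ RWGD.fro M := by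
    intro M
    have h := RWGD.fro_mul_one_sub_smul_le (α := α) (κ := 1) hHpsd zero_le_one M ?_
    · rw [← hGdef] at h
      simpa using h
    · intro μ v hv heig
      left
      have hμ0 : 0 ≤ μ := RWGD.eig_nonneg hHpsd hv heig
      have hμspec : |μ| ≤ specNorm H := RWGD.eig_le_spec hv heig
      rw [abs_of_nonneg hμ0] at hμspec
      have hαμ : α * μ < 1 :=
        lt_of_le_of_lt (mul_le_mul_of_nonneg_left hμspec hα0.le) hα1
      rw [abs_le]
      constructor
      · nlinarith
      · nlinarith [mul_nonneg hα0.le hμ0]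
  have keyL : ∀ M : Matrix (Fin d) (Fin d) ℝ, RWGD.fro (G * M) = RWGD.fro (Mᵀ * G) := by
    intro M
    rw [← RWGD.fro_transpose (G * M), Matrix.transpose_mul, hGsymm]
  -- the S map
  set Sbody : Matrix (Fin d) (Fin d) ℝ → Matrix (Fin d) (Fin d) ℝ :=
    fun A => G * A * G + α ^ 2 • (Xᵀ * Matrix.hadamard SD (X * A * Xᵀ) * X) with hSbody
  have hSadd : ∀ A B, Sbody (A + B) = Sbody A + Sbody B := by
    intro A B
    simp only [hSbody, Matrix.mul_add, Matrix.add_mul, Matrix.hadamard_add, smul_add]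
    abel
  have hSsmul : ∀ (c : ℝ) A, Sbody (c • A) = c • Sbody A := by
    intro c A
    simp only [hSbody, Matrix.mul_smul, Matrix.smul_mul, Matrix.hadamard_smul, smul_add,
      smul_smul, mul_comm]
  let Sfun : Matrix (Fin d) (Fin d) ℝ →ₗ[ℝ] Matrix (Fin d) (Fin d) ℝ :=
    { toFun := Sbody
      map_add' := hSadd
      map_smul' := hSsmul }
  have hSfun : ∀ A, Sfun A = Sbody A := fun A => rfl
  set Lfun : Matrix (Fin d) (Fin d) ℝ →ₗ[ℝ] Matrix (Fin d) (Fin d) ℝ :=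
    LinearMap.id - Sfun with hLfun
  have hLfunApp : ∀ A, Lfun A = A - Sbody A := fun A => rfl
  -- subspaces
  let V : Submodule ℝ (Matrix (Fin d) (Fin d) ℝ) :=
    { carrier := {A | ∀ v, X *ᵥ v = 0 → A *ᵥ v = 0}
      add_mem' := by
        intro A B hA hB v hv
        rw [Matrix.add_mulVec, hA v hv, hB v hv, add_zero]
      zero_mem' := by
        intro v hv
        exact Matrix.zero_mulVec v
      smul_mem' := by
        intro c A hA v hv
        rw [Matrix.smul_mulVec, hA v hv, smul_zero] }
  have hVmem : ∀ A : Matrix (Fin d) (Fin d) ℝ,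
      A ∈ V ↔ ∀ v, X *ᵥ v = 0 → A *ᵥ v = 0 := fun A => Iff.rfl
  let W : Submodule ℝ (Matrix (Fin d) (Fin d) ℝ) :=
    { carrier := {A | (∀ v, X *ᵥ v = 0 → A *ᵥ v = 0) ∧ (∀ v, X *ᵥ v = 0 → Aᵀ *ᵥ v = 0)}
      add_mem' := by
        intro A B hA hB
        constructor
        · intro v hv; rw [Matrix.add_mulVec, hA.1 v hv, hB.1 v hv, add_zero]
        · intro v hv
          rw [Matrix.transpose_add, Matrix.add_mulVec, hA.2 v hv, hB.2 v hv, add_zero]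
      zero_mem' := by
        constructor
        · intro v hv; exact Matrix.zero_mulVec v
        · intro v hv; rw [Matrix.transpose_zero]; exact Matrix.zero_mulVec v
      smul_mem' := by
        intro c A hA
        constructor
        · intro v hv; rw [Matrix.smul_mulVec, hA.1 v hv, smul_zero]
        · intro v hv
          rw [Matrix.transpose_smul, Matrix.smul_mulVec, hA.2 v hv, smul_zero] }
  have hWmem : ∀ A : Matrix (Fin d) (Fin d) ℝ,
      A ∈ W ↔ (∀ v, X *ᵥ v = 0 → A *ᵥ v = 0) ∧ (∀ v, X *ᵥ v = 0 → Aᵀ *ᵥ v = 0) :=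
    fun A => Iff.rfl
  -- S preserves V and W
  have hSV : ∀ A : Matrix (Fin d) (Fin d) ℝ, (∀ v, X *ᵥ v = 0 → A *ᵥ v = 0) →
      ∀ v, X *ᵥ v = 0 → Sbody A *ᵥ v = 0 := by
    intro A hA v hv
    have h1 : (G * A * G) *ᵥ v = 0 := by
      rw [← Matrix.mulVec_mulVec, hGv v hv, ← Matrix.mulVec_mulVec, hA v hv,
        Matrix.mulVec_zero]
    have h2 : (Xᵀ * Matrix.hadamard SD (X * A * Xᵀ) * X) *ᵥ v = 0 := by
      rw [← Matrix.mulVec_mulVec, hv, Matrix.mulVec_zero]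
    show (G * A * G + α ^ 2 • (Xᵀ * Matrix.hadamard SD (X * A * Xᵀ) * X)) *ᵥ v = 0
    rw [Matrix.add_mulVec, h1, Matrix.smul_mulVec, h2, smul_zero, add_zero]
  have hST : ∀ A : Matrix (Fin d) (Fin d) ℝ, (Sbody A)ᵀ = Sbody Aᵀ := by
    intro A
    simp only [hSbody, Matrix.transpose_add, Matrix.transpose_smul, Matrix.transpose_mul,
      Matrix.transpose_transpose, RWGD.transpose_hadamard, hGsymm, hSDsymm, Matrix.mul_assoc]
  -- contraction bound on V
  have hfroS : ∀ A : Matrix (Fin d) (Fin d) ℝ, (∀ v, X *ᵥ v = 0 → A *ᵥ v = 0) →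
      RWGD.fro (Sbody A) ≤ ((1 - α * σ) + α ^ 2 * s) * RWGD.fro A := by
    intro A hA
    have hGA : ∀ v, X *ᵥ v = 0 → (G * A) *ᵥ v = 0 := by
      intro v hv
      rw [← Matrix.mulVec_mulVec, hA v hv, Matrix.mulVec_zero]
    have h1 : RWGD.fro (G * A * G) ≤ (1 - α * σ) * RWGD.fro A := by
      calc RWGD.fro (G * A * G) ≤ (1 - α * σ) * RWGD.fro (G * A) := key1 (G * A) hGA
        _ = (1 - α * σ) * RWGD.fro (Aᵀ * G) := by rw [keyL]
        _ ≤ (1 - α * σ) * RWGD.fro Aᵀ :=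
            mul_le_mul_of_nonneg_left (key2 Aᵀ) hκ0
        _ = (1 - α * σ) * RWGD.fro A := by rw [RWGD.fro_transpose]
    have h2 : RWGD.fro (Xᵀ * Matrix.hadamard SD (X * A * Xᵀ) * X) ≤ s * RWGD.fro A := by
      calc RWGD.fro (Xᵀ * Matrix.hadamard SD (X * A * Xᵀ) * X)
          ≤ RWGD.fro (Matrix.hadamard SD (X * A * Xᵀ)) := RWGD.fro_XtNX_le hXnorm _
        _ ≤ s * RWGD.fro (X * A * Xᵀ) :=
            RWGD.fro_hadamard_le hs0 (fun i j => RWGD.abs_entry_le_specNorm SD i j)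
        _ ≤ s * RWGD.fro A :=
            mul_le_mul_of_nonneg_left (RWGD.fro_XAXt_le hXnorm A) hs0
    calc RWGD.fro (Sbody A)
        ≤ RWGD.fro (G * A * G) +
          RWGD.fro (α ^ 2 • (Xᵀ * Matrix.hadamard SD (X * A * Xᵀ) * X)) :=
          RWGD.fro_add_le _ _
      _ = RWGD.fro (G * A * G) +
          α ^ 2 * RWGD.fro (Xᵀ * Matrix.hadamard SD (X * A * Xᵀ) * X) := by
          rw [RWGD.fro_smul, abs_of_nonneg (sq_nonneg α)]
      _ ≤ (1 - α * σ) * RWGD.fro A + α ^ 2 * (s * RWGD.fro A) := by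
          have := mul_le_mul_of_nonneg_left h2 (sq_nonneg α)
          linarith
      _ = ((1 - α * σ) + α ^ 2 * s) * RWGD.fro A := by ring
  -- uniqueness / injectivity on V
  have hZero : ∀ A : Matrix (Fin d) (Fin d) ℝ, (∀ v, X *ᵥ v = 0 → A *ᵥ v = 0) →
      A - Sbody A = 0 → A = 0 := by
    intro A hA h0
    have hAS : A = Sbody A := by rwa [sub_eq_zero] at h0
    have h1 : RWGD.fro A ≤ ((1 - α * σ) + α ^ 2 * s) * RWGD.fro A := by
      calc RWGD.fro A = RWGD.fro (Sbody A) := by rw [← hAS]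
        _ ≤ ((1 - α * σ) + α ^ 2 * s) * RWGD.fro A := hfroS A hA
    have hq1 : (1 - α * σ) + α ^ 2 * s < 1 := by
      nlinarith [mul_lt_mul_of_pos_left hα2 hα0]
    have hfnn := RWGD.fro_nonneg A
    have hf0 : RWGD.fro A = 0 := by nlinarith
    have hfsq : RWGD.froSq A = 0 := by
      have h2 := RWGD.fro_sq A
      rw [hf0] at h2
      simpa using h2.symm
    exact RWGD.eq_zero_of_froSq_eq_zero hfsq
  -- restricted bijections
  have hLmemV : ∀ A ∈ V, Lfun A ∈ V := by
    intro A hA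
    exact V.sub_mem hA ((hVmem _).mpr (hSV A ((hVmem A).mp hA)))
  have hLmemW : ∀ A ∈ W, Lfun A ∈ W := by
    intro A hA
    refine W.sub_mem hA ((hWmem _).mpr ⟨hSV A ((hWmem A).mp hA).1, ?_⟩)
    rw [hSfun, hST]
    exact hSV Aᵀ ((hWmem A).mp hA).2
  let LV : V →ₗ[ℝ] V := Lfun.restrict hLmemV
  let LW : W →ₗ[ℝ] W := Lfun.restrict hLmemW
  have hLVinj : Function.Injective LV := by
    apply LinearMap.ker_eq_bot.mp
    apply LinearMap.ker_eq_bot'.mpr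
    rintro ⟨A, hA⟩ hx
    have hx' : Lfun A = 0 := congrArg Subtype.val hx
    exact Subtype.ext (hZero A ((hVmem A).mp hA) hx')
  have hLWinj : Function.Injective LW := by
    apply LinearMap.ker_eq_bot.mp
    apply LinearMap.ker_eq_bot'.mpr
    rintro ⟨A, hA⟩ hx
    have hx' : Lfun A = 0 := congrArg Subtype.val hx
    exact Subtype.ext (hZero A ((hWmem A).mp hA).1 hx')
  let eV : V ≃ₗ[ℝ] V :=
    LinearEquiv.ofBijective LV ⟨hLVinj, LinearMap.injective_iff_surjective.mp hLVinj⟩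
  let eW : W ≃ₗ[ℝ] W :=
    LinearEquiv.ofBijective LW ⟨hLWinj, LinearMap.injective_iff_surjective.mp hLWinj⟩
  refine ⟨fun A => if h : A ∈ V then ((eV.symm ⟨A, h⟩ : V) : Matrix (Fin d) (Fin d) ℝ)
    else 0, ?_, ?_, ?_, ?_, ?_⟩
  · -- T preserves the kernel condition
    intro A hA v hv
    dsimp only
    rw [dif_pos ((hVmem A).mpr hA)]
    exact ((hVmem _).mp (eV.symm ⟨A, (hVmem A).mpr hA⟩).2) v hv
  · -- left inverse
    intro A hA
    dsimp only
    have hA' : A ∈ V := (hVmem A).mpr hA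
    have hL : A - (G * A * G + α ^ 2 • (Xᵀ * Matrix.hadamard SD (X * A * Xᵀ) * X)) =
        Lfun A := rfl
    rw [hL, dif_pos (hLmemV A hA')]
    have he : eV ⟨A, hA'⟩ = ⟨Lfun A, hLmemV A hA'⟩ := Subtype.ext rfl
    rw [← he, LinearEquiv.symm_apply_apply]
  · -- right inverse
    intro A hA
    dsimp only
    have hA' : A ∈ V := (hVmem A).mpr hA
    rw [dif_pos hA']
    set BB : Matrix (Fin d) (Fin d) ℝ :=
      ((eV.symm ⟨A, hA'⟩ : V) : Matrix (Fin d) (Fin d) ℝ) with hBB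
    have h2 : LV (eV.symm ⟨A, hA'⟩) = ⟨A, hA'⟩ := eV.apply_symm_apply ⟨A, hA'⟩
    have h3 : BB - Sbody BB = A := congrArg Subtype.val h2
    exact h3
  · -- main norm bound
    dsimp only
    have hSintV : ∀ v, X *ᵥ v = 0 →
        (α ^ 2 • (Xᵀ * Matrix.hadamard SD (Matrix.vecMulVec r r) * X)) *ᵥ v = 0 := by
      intro v hv
      rw [Matrix.smul_mulVec, ← Matrix.mulVec_mulVec, hv, Matrix.mulVec_zero,
        smul_zero]
    have hvvT : (Matrix.vecMulVec r r)ᵀ = Matrix.vecMulVec r r := by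
      ext i j
      simp [Matrix.vecMulVec_apply, mul_comm]
    have hSintT : (α ^ 2 • (Xᵀ * Matrix.hadamard SD (Matrix.vecMulVec r r) * X))ᵀ =
        α ^ 2 • (Xᵀ * Matrix.hadamard SD (Matrix.vecMulVec r r) * X) := by
      simp only [Matrix.transpose_smul, Matrix.transpose_mul, Matrix.transpose_transpose,
        RWGD.transpose_hadamard, hSDsymm, hvvT, Matrix.mul_assoc]
    have hSintV' : (α ^ 2 • (Xᵀ * Matrix.hadamard SD (Matrix.vecMulVec r r) * X)) ∈ V :=
      (hVmem _).mpr hSintV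
    have hSintW : (α ^ 2 • (Xᵀ * Matrix.hadamard SD (Matrix.vecMulVec r r) * X)) ∈ W :=
      (hWmem _).mpr ⟨hSintV, by rw [hSintT]; exact hSintV⟩
    rw [dif_pos hSintV']
    set Sint : Matrix (Fin d) (Fin d) ℝ :=
      α ^ 2 • (Xᵀ * Matrix.hadamard SD (Matrix.vecMulVec r r) * X) with hSint
    set B : Matrix (Fin d) (Fin d) ℝ := ↑(eV.symm ⟨Sint, hSintV'⟩) with hB
    set C : Matrix (Fin d) (Fin d) ℝ := ↑(eW.symm ⟨Sint, hSintW⟩) with hC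
    have hLB : Lfun B = Sint := by
      have h2 : LV (eV.symm ⟨Sint, hSintV'⟩) = ⟨Sint, hSintV'⟩ :=
        eV.apply_symm_apply ⟨Sint, hSintV'⟩
      exact congrArg Subtype.val h2
    have hLC : Lfun C = Sint := by
      have h2 : LW (eW.symm ⟨Sint, hSintW⟩) = ⟨Sint, hSintW⟩ :=
        eW.apply_symm_apply ⟨Sint, hSintW⟩
      exact congrArg Subtype.val h2
    have hBV : ∀ v, X *ᵥ v = 0 → B *ᵥ v = 0 :=
      (hVmem _).mp (eV.symm ⟨Sint, hSintV'⟩).2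
    have hCW := (hWmem _).mp (eW.symm ⟨Sint, hSintW⟩).2
    have hBeqC : B = C := by
      have hdiff : (B - C) - Sbody (B - C) = 0 := by
        have h3 : Lfun (B - C) = Lfun B - Lfun C := map_sub Lfun B C
        rw [hLB, hLC, sub_self] at h3
        exact h3
      have hmem : ∀ v, X *ᵥ v = 0 → (B - C) *ᵥ v = 0 := by
        intro v hv
        rw [Matrix.sub_mulVec, hBV v hv, hCW.1 v hv, sub_zero]
      have := hZero (B - C) hmem hdiff
      exact sub_eq_zero.mp this
    have hBtV : ∀ v, X *ᵥ v = 0 → Bᵀ *ᵥ v = 0 := by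
      rw [hBeqC]
      exact hCW.2
    -- the fixed-point equation
    have hBeqn : B = Sbody B + Sint := by
      have h : B - Sbody B = Sint := hLB
      exact sub_eq_iff_eq_add'.mp h
    -- Frobenius estimates
    have hGB : ∀ v, X *ᵥ v = 0 → (G * B) *ᵥ v = 0 := by
      intro v hv
      rw [← Matrix.mulVec_mulVec, hBV v hv, Matrix.mulVec_zero]
    have hfroGBG : RWGD.fro (G * B * G) ≤ (1 - α * σ) ^ 2 * RWGD.fro B := by
      calc RWGD.fro (G * B * G) ≤ (1 - α * σ) * RWGD.fro (G * B) := key1 (G * B) hGB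
        _ = (1 - α * σ) * RWGD.fro (Bᵀ * G) := by rw [keyL]
        _ ≤ (1 - α * σ) * ((1 - α * σ) * RWGD.fro Bᵀ) :=
            mul_le_mul_of_nonneg_left (key1 Bᵀ hBtV) hκ0
        _ = (1 - α * σ) ^ 2 * RWGD.fro B := by rw [RWGD.fro_transpose]; ring
    have hfroHad : RWGD.fro (Xᵀ * Matrix.hadamard SD (X * B * Xᵀ) * X) ≤
        s * RWGD.fro B := by
      calc RWGD.fro (Xᵀ * Matrix.hadamard SD (X * B * Xᵀ) * X)
          ≤ RWGD.fro (Matrix.hadamard SD (X * B * Xᵀ)) := RWGD.fro_XtNX_le hXnorm _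
        _ ≤ s * RWGD.fro (X * B * Xᵀ) :=
            RWGD.fro_hadamard_le hs0 (fun i j => RWGD.abs_entry_le_specNorm SD i j)
        _ ≤ s * RWGD.fro B :=
            mul_le_mul_of_nonneg_left (RWGD.fro_XAXt_le hXnorm B) hs0
    have hfroSint : RWGD.fro Sint ≤ α ^ 2 * s * (l2norm r) ^ 2 := by
      calc RWGD.fro Sint
          = α ^ 2 * RWGD.fro (Xᵀ * Matrix.hadamard SD (Matrix.vecMulVec r r) * X) := by
            rw [hSint, RWGD.fro_smul, abs_of_nonneg (sq_nonneg α)]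
        _ ≤ α ^ 2 * RWGD.fro (Matrix.hadamard SD (Matrix.vecMulVec r r)) :=
            mul_le_mul_of_nonneg_left (RWGD.fro_XtNX_le hXnorm _) (sq_nonneg α)
        _ ≤ α ^ 2 * (s * RWGD.fro (Matrix.vecMulVec r r)) :=
            mul_le_mul_of_nonneg_left
              (RWGD.fro_hadamard_le hs0 (fun i j => RWGD.abs_entry_le_specNorm SD i j))
              (sq_nonneg α)
        _ = α ^ 2 * s * (l2norm r) ^ 2 := by rw [RWGD.fro_vecMulVec]; ring
    have hF : RWGD.fro B ≤ ((1 - α * σ) ^ 2 + α ^ 2 * s) * RWGD.fro B +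
        α ^ 2 * s * (l2norm r) ^ 2 := by
      calc RWGD.fro B = RWGD.fro (Sbody B + Sint) := by rw [← hBeqn]
        _ ≤ RWGD.fro (Sbody B) + RWGD.fro Sint := RWGD.fro_add_le _ _
        _ ≤ (RWGD.fro (G * B * G) +
              α ^ 2 * RWGD.fro (Xᵀ * Matrix.hadamard SD (X * B * Xᵀ) * X)) +
            RWGD.fro Sint := by
            have h := RWGD.fro_add_le (G * B * G)
              (α ^ 2 • (Xᵀ * Matrix.hadamard SD (X * B * Xᵀ) * X))
            rw [RWGD.fro_smul, abs_of_nonneg (sq_nonneg α)] at h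
            have h2 : RWGD.fro (Sbody B) = RWGD.fro (G * B * G +
              α ^ 2 • (Xᵀ * Matrix.hadamard SD (X * B * Xᵀ) * X)) := by rw [hSbody]
            rw [h2]
            linarith
        _ ≤ ((1 - α * σ) ^ 2 + α ^ 2 * s) * RWGD.fro B +
            α ^ 2 * s * (l2norm r) ^ 2 := by
            have h3 := mul_le_mul_of_nonneg_left hfroHad (sq_nonneg α)
            nlinarith [hfroGBG, hfroSint]
    have hF0 : 0 ≤ RWGD.fro B := RWGD.fro_nonneg B
    have hR0 : 0 ≤ (l2norm r) ^ 2 := sq_nonneg _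
    have hslack : 0 ≤ α * σ - α ^ 2 * σ ^ 2 - α ^ 2 * s := by
      nlinarith [mul_lt_mul_of_pos_left hα2 hα0]
    have h1 : (2 * α * σ - α ^ 2 * σ ^ 2 - α ^ 2 * s) * RWGD.fro B ≤
        α ^ 2 * s * (l2norm r) ^ 2 := by nlinarith [hF]
    have h2 : α * σ * RWGD.fro B ≤ α ^ 2 * s * (l2norm r) ^ 2 := by
      nlinarith [mul_nonneg hslack hF0]
    have hFle : RWGD.fro B ≤ α * s * (l2norm r) ^ 2 / σ := by
      rw [le_div_iff₀ hσpos]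
      have h3 : α * (RWGD.fro B * σ) ≤ α * (α * s * (l2norm r) ^ 2) := by nlinarith
      exact le_of_mul_le_mul_left h3 hα0
    have hXtX : specNorm (Xᵀ * X) = 1 := by
      rw [RWGD.specNorm_transpose_mul_self, hXnorm]; ring
    rw [hXtX]
    calc specNorm B ≤ RWGD.fro B := RWGD.specNorm_le_fro B
      _ ≤ α * s * (l2norm r) ^ 2 / σ := hFle
      _ = α * 1 * s / σ * (l2norm r) ^ 2 := by ring
  · -- final comparison
    have hXtX : specNorm (Xᵀ * X) = 1 := by
      rw [RWGD.specNorm_transpose_mul_self, hXnorm]; ring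
    rw [hXtX]
    have hR0 : 0 ≤ (l2norm r) ^ 2 := sq_nonneg _
    have hcoef : α * 1 * s / σ ≤ 1 := by
      rw [div_le_one hσpos]
      nlinarith [mul_nonneg hα0.le (sq_nonneg σ)]
    calc α * 1 * s / σ * (l2norm r) ^ 2 ≤ 1 * (l2norm r) ^ 2 :=
        mul_le_mul_of_nonneg_right hcoef hR0
      _ = (l2norm r) ^ 2 := one_mul _
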